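/- Let α > 1, t ∈ (1 − 1/α, 1), and suppose the irrational θ ∈ [0,1] satisfies A_α(θ) < ∞, i.e., there is c > 1 with a_{k+1} qₖ^{1-α} < c for all sufficiently large k. Then for r = α − (α−1)/t, limsup_{m→∞} qₘ^{tr} Σ_{k≥m} Σ_{j=1}^{a_{k+1}} (j qₖ + qₖ₋₁)^{-t} < ∞, and for any 0 < r < α − (α−1)/t this limsup equals 0. -/

import Mathlib

open Filter Topology MeasureTheory

namespace CFPaper

/-- Continued fraction denominators: `q 0 = 1`, `q 1 = a 1`, `q (n+2) = a (n+2) * q (n+1) + q n`. -/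
def cfQ (a : ℕ → ℕ) : ℕ → ℕ
  | 0 => 1
  | 1 => a 1
  | (n+2) => a (n+2) * cfQ a (n+1) + cfQ a n

/-- Continued fraction numerators. -/
def cfP (a : ℕ → ℕ) : ℕ → ℕ
  | 0 => 0
  | 1 => 1
  | (n+2) => a (n+2) * cfP a (n+1) + cfP a n

/-- `q_{n-1}` with the convention `q_{-1} = 0`. -/
def qext (a : ℕ → ℕ) : ℕ → ℕ
  | 0 => 0
  | (n+1) => cfQ a n

/-- `p_{n-1}` with the convention `p_{-1} = 1`. -/
def pext (a : ℕ → ℕ) : ℕ → ℕ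
  | 0 => 1
  | (n+1) => cfP a n

/-- `a` (with `a 1, a 2, …` relevant) is the continued fraction expansion of the
irrational `θ`: all entries are positive and the convergents tend to `θ`. -/
def IsCF (θ : ℝ) (a : ℕ → ℕ) : Prop :=
  Irrational θ ∧ (∀ n, 1 ≤ n → 1 ≤ a n) ∧
    Tendsto (fun n => (cfP a n : ℝ) / (cfQ a n : ℝ)) atTop (nhds θ)

/-- `A_α(θ) = limsup_n a_n q_{n-1}^{1-α}` (valued in `ℝ≥0∞`). -/
noncomputable def Acf (a : ℕ → ℕ) (α : ℝ) : ENNReal :=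
  Filter.limsup (fun n => (a (n+1) : ENNReal) * (cfQ a n : ENNReal) ^ (1 - α)) atTop

/-- The left shift on infinite binary sequences. -/
def shiftMap (x : ℕ → Bool) : ℕ → Bool := fun n => x (n+1)

/-- A subshift: a closed shift-invariant subset of `{0,1}^ℕ`. -/
def IsSubshift (Y : Set (ℕ → Bool)) : Prop := IsClosed Y ∧ shiftMap '' Y = Y

/-- The language of `Y`: all finite factors of elements of `Y`. -/
def Lang (Y : Set (ℕ → Bool)) : Set (List Bool) :=
  {w | ∃ x ∈ Y, ∃ k, w = (List.range w.length).map fun i => x (k + i)}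

/-- The rotation sequence of slope `θ`: `x n = ⌈θ(n+1)⌉ - ⌈θ n⌉` (as a boolean, `true` = 1). -/
noncomputable def rotWord (θ : ℝ) : ℕ → Bool :=
  fun n => if ⌈θ * ((n : ℝ)+1)⌉ - ⌈θ * (n : ℝ)⌉ = 1 then true else false

/-- The Sturmian subshift of slope `θ`: orbit closure of the rotation sequence. -/
noncomputable def sturmian (θ : ℝ) : Set (ℕ → Bool) :=
  closure {x | ∃ k, x = shiftMap^[k] (rotWord θ)}

/-- `w` is a nonempty proper prefix and suffix of `W`, both in the language of `Y`. -/
def PSPair (Y : Set (ℕ → Bool)) (w W : List Bool) : Prop :=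
  w ∈ Lang Y ∧ W ∈ Lang Y ∧ w <+: W ∧ w <:+ W ∧ W ≠ w ∧ w ≠ []

/-- `A_{α,n}`: infimum of `(|W|-|w|)/|w|^{1/α}` over admissible pairs with `|W| = n`. -/
noncomputable def repA (Y : Set (ℕ → Bool)) (α : ℝ) (n : ℕ) : ENNReal :=
  sInf {r | ∃ w W, PSPair Y w W ∧ W.length = n ∧
    r = ((W.length - w.length : ℕ) : ENNReal) / ((w.length : ENNReal) ^ (1/α))}

/-- `ℓ_α = liminf_n A_{α,n}`. -/
noncomputable def ellCf (Y : Set (ℕ → Bool)) (α : ℝ) : ENNReal :=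
  Filter.liminf (repA Y α) atTop

/-- `ℓ`: infimum of `(|W|-|w|)/|w|` over all admissible pairs; `Y` is repulsive if `ℓ > 0`. -/
noncomputable def ellRep (Y : Set (ℕ → Bool)) : ENNReal :=
  sInf {r | ∃ w W, PSPair Y w W ∧
    r = ((W.length - w.length : ℕ) : ENNReal) / (w.length : ENNReal)}

/-- The repetitive function: `repFun Y r` is the least `r'` such that every word of
length `r'` in the language contains every word of length `r` as a factor. -/
noncomputable def repFun (Y : Set (ℕ → Bool)) (r : ℕ) : ℕ :=
  sInf {r' | ∀ W ∈ Lang Y, W.length = r' → ∀ w ∈ Lang Y, w.length = r → w <:+: W}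

/-- `R_α = limsup_n R(n)/n^α`. -/
noncomputable def Ralpha (Y : Set (ℕ → Bool)) (α : ℝ) : ENNReal :=
  Filter.limsup (fun n => (repFun Y n : ENNReal) / (n : ENNReal) ^ α) atTop

/-- `Q(n)`: the supremum of powers `p` such that some word of length `n` has `W^p` in the language. -/
noncomputable def Qfun (Y : Set (ℕ → Bool)) (n : ℕ) : ENNReal :=
  sSup {x | ∃ p : ℕ, x = (p : ENNReal) ∧ ∃ W ∈ Lang Y,
    W.length = n ∧ (List.replicate p W).flatten ∈ Lang Y}

/-- `Q_α = limsup_n Q(n)/n^{α-1}`. -/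
noncomputable def Qalpha (Y : Set (ℕ → Bool)) (α : ℝ) : ENNReal :=
  Filter.limsup (fun n => Qfun Y n / (n : ENNReal) ^ (α - 1)) atTop

/-- The Jarník set `J_β^c`. -/
def Jarnik (β c : ℝ) : Set ℝ :=
  {x | x ∈ Set.Icc (0:ℝ) 1 ∧
    {pq : ℕ × ℕ | 0 < pq.2 ∧ |x - (pq.1 : ℝ)/(pq.2 : ℝ)| ≤ c * (pq.2 : ℝ) ^ (-β)}.Infinite}

/-- The exact Jarník set `Exact(β)`. -/
def ExactSet (β : ℝ) : Set ℝ :=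
  Jarnik β 1 \ ⋃ n ∈ {n : ℕ | 2 ≤ n}, Jarnik β ((n : ℝ)/((n : ℝ)+1))

/-- The substitution `τ` : `0 ↦ 0`, `1 ↦ 10`. -/
def tauW (w : List Bool) : List Bool := w.flatMap fun b => if b then [true, false] else [false]

/-- The substitution `ρ` : `0 ↦ 01`, `1 ↦ 1`. -/
def rhoW (w : List Bool) : List Bool := w.flatMap fun b => if b then [true] else [false, true]

/-- The composition `τ^{a₁} ∘ ρ^{a₂} ∘ ⋯ ∘ τ^{a_{2k-1}} ∘ ρ^{a_{2k}}`. -/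
def stageW (a : ℕ → ℕ) : ℕ → List Bool → List Bool
  | 0 => id
  | (k+1) => stageW a k ∘ tauW^[a (2*k+1)] ∘ rhoW^[a (2*k+2)]

/-- The word `R_k`. -/
def Rw (a : ℕ → ℕ) (k : ℕ) : List Bool := stageW a k [false]

/-- The word `L_k`. -/
def Lw (a : ℕ → ℕ) (k : ℕ) : List Bool := stageW a k [true]

/-- Best rational approximation of the first kind. -/
def IsBestApprox (θ : ℝ) (p q : ℕ) : Prop :=
  0 < q ∧ Nat.Coprime p q ∧
    ∀ p' q' : ℕ, 0 < q' → q' < q → |θ - (p : ℝ)/(q : ℝ)| < |θ - (p' : ℝ)/(q' : ℝ)|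

/-- The double sum `Σ_{k ≥ m} Σ_{j=1}^{a_{k+1}} (j q_k + q_{k-1})^{-t}` (valued in `ℝ≥0∞`). -/
noncomputable def dblSum (a : ℕ → ℕ) (t : ℝ) (m : ℕ) : ENNReal :=
  ∑' k : ℕ, if m ≤ k then
    ∑ j ∈ Finset.Icc 1 (a (k+1)), ((j * cfQ a k + qext a k : ℕ) : ENNReal) ^ (-t)
  else 0

open scoped ENNReal

lemma one_le_cfQ (a : ℕ → ℕ) (ha : ∀ n, 1 ≤ n → 1 ≤ a n) : ∀ n, 1 ≤ cfQ a n
  | 0 => le_refl 1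
  | 1 => ha 1 le_rfl
  | (n+2) => by
      have h1 := one_le_cfQ a ha (n+1)
      have h2 := ha (n+2) (by omega)
      show 1 ≤ a (n+2) * cfQ a (n+1) + cfQ a n
      calc 1 ≤ a (n+2) * cfQ a (n+1) := Nat.one_le_iff_ne_zero.2 (by positivity)
      _ ≤ _ := Nat.le_add_right _ _

lemma cfQ_mono (a : ℕ → ℕ) (ha : ∀ n, 1 ≤ n → 1 ≤ a n) : Monotone (cfQ a) := by
  apply monotone_nat_of_le_succ
  intro n
  match n with
  | 0 => exact ha 1 le_rfl
  | (m+1) =>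
    show cfQ a (m+1) ≤ a (m+2) * cfQ a (m+1) + cfQ a m
    calc cfQ a (m+1) ≤ a (m+2) * cfQ a (m+1) :=
          Nat.le_mul_of_pos_left _ (ha (m+2) (by omega))
    _ ≤ _ := Nat.le_add_right _ _

lemma two_cfQ_le (a : ℕ → ℕ) (ha : ∀ n, 1 ≤ n → 1 ≤ a n) (n : ℕ) :
    2 * cfQ a n ≤ cfQ a (n+2) := by
  show 2 * cfQ a n ≤ a (n+2) * cfQ a (n+1) + cfQ a n
  have h1 : cfQ a n ≤ cfQ a (n+1) := cfQ_mono a ha (Nat.le_succ n)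
  have h2 : cfQ a (n+1) ≤ a (n+2) * cfQ a (n+1) :=
    Nat.le_mul_of_pos_left _ (ha (n+2) (by omega))
  omega

lemma pow_le_cfQ (a : ℕ → ℕ) (ha : ∀ n, 1 ≤ n → 1 ≤ a n) (m : ℕ) :
    ∀ i, 2^i * cfQ a m ≤ cfQ a (m + 2*i) := by
  intro i
  induction i with
  | zero => simp
  | succ i ih =>
    have h := two_cfQ_le a ha (m + 2*i)
    have : m + 2*(i+1) = (m + 2*i) + 2 := by ring
    rw [this, pow_succ]
    calc 2^i * 2 * cfQ a m = 2 * (2^i * cfQ a m) := by ring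
    _ ≤ 2 * cfQ a (m + 2*i) := by omega
    _ ≤ _ := h

lemma pow_half_le_cfQ (a : ℕ → ℕ) (ha : ∀ n, 1 ≤ n → 1 ≤ a n) (m : ℕ) :
    2^(m/2) ≤ cfQ a m := by
  have h := pow_le_cfQ a ha 0 (m/2)
  simp only [cfQ, Nat.zero_add, mul_one] at h
  exact le_trans h (cfQ_mono a ha (by omega))

lemma rpow_step {t : ℝ} (ht0 : 0 < t) (ht1 : t < 1) {x : ℝ} (hx : 1 ≤ x) :
    (1 - t) * x ^ (-t) ≤ x ^ (1-t) - (x - 1) ^ (1-t) := by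
  have hx0 : 0 < x := lt_of_lt_of_le one_pos hx
  have hbern : (1 + (-1/x)) ^ (1-t) ≤ 1 + (1-t) * (-1/x) := by
    apply rpow_one_add_le_one_add_mul_self
    · rw [neg_div, neg_le_neg_iff]
      exact div_le_one_of_le₀ hx hx0.le
    · linarith
    · linarith
  have h1 : (1 + (-1/x)) = (x - 1)/x := by field_simp; ring
  have h2 : ((x-1)/x) ^ (1-t) = (x-1)^(1-t) / x^(1-t) := by
    rw [Real.div_rpow (by linarith) hx0.le]
  rw [h1, h2] at hbern
  have hxp : 0 < x ^ (1-t) := Real.rpow_pos_of_pos hx0 _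
  have hkey : (x-1)^(1-t) ≤ (1 + (1-t) * (-1/x)) * x^(1-t) := by
    rw [div_le_iff₀ hxp] at hbern; linarith
  have hxe : x^(1-t) / x = x ^ (-t) := by
    rw [div_eq_mul_inv, ← Real.rpow_neg_one x, ← Real.rpow_add hx0]
    ring_nf
  have : (1 + (1-t) * (-1/x)) * x^(1-t) = x^(1-t) - (1-t) * (x^(1-t)/x) := by
    field_simp; ring
  rw [this, hxe] at hkey
  linarith

lemma sum_rpow_le {t : ℝ} (ht0 : 0 < t) (ht1 : t < 1) (A : ℕ) :
    ∑ j ∈ Finset.Icc 1 A, ((j:ℝ))^(-t) ≤ (A:ℝ)^(1-t)/(1-t) := by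
  induction A with
  | zero => simp [Real.zero_rpow (by linarith : (1:ℝ)-t ≠ 0)]
  | succ A ih =>
    rw [Finset.sum_Icc_succ_top (by omega : 1 ≤ A + 1)]
    have hstep := rpow_step ht0 ht1 (x := (A:ℝ)+1) (by exact_mod_cast Nat.le_add_left 1 A)
    have h1t : 0 < 1 - t := by linarith
    have hcast : ((A+1:ℕ):ℝ) = (A:ℝ)+1 := by push_cast; ring
    rw [hcast]
    have : ((A:ℝ)+1)^(-t) ≤ (((A:ℝ)+1)^(1-t) - (A:ℝ)^(1-t))/(1-t) := by
      rw [le_div_iff₀ h1t]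
      have : ((A:ℝ)+1) - 1 = (A:ℝ) := by ring
      nlinarith [hstep, this ▸ hstep]
    calc ∑ j ∈ Finset.Icc 1 A, ((j:ℝ))^(-t) + ((A:ℝ)+1)^(-t)
        ≤ (A:ℝ)^(1-t)/(1-t) + (((A:ℝ)+1)^(1-t) - (A:ℝ)^(1-t))/(1-t) := by
          exact add_le_add ih this
    _ = ((A:ℝ)+1)^(1-t)/(1-t) := by ring

lemma esum_rpow_le {t : ℝ} (ht0 : 0 < t) (ht1 : t < 1) (A : ℕ) :
    ∑ j ∈ Finset.Icc 1 A, ((j:ℝ≥0∞))^(-t) ≤ ENNReal.ofReal ((A:ℝ)^(1-t)/(1-t)) := by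
  calc ∑ j ∈ Finset.Icc 1 A, ((j:ℝ≥0∞))^(-t)
      = ∑ j ∈ Finset.Icc 1 A, ENNReal.ofReal ((j:ℝ)^(-t)) := by
        apply Finset.sum_congr rfl
        intro j hj
        have hj1 : (0:ℝ) < j := by
          have := (Finset.mem_Icc.1 hj).1; exact_mod_cast Nat.lt_of_lt_of_le Nat.zero_lt_one this
        rw [← ENNReal.ofReal_rpow_of_pos hj1, ENNReal.ofReal_natCast]
    _ = ENNReal.ofReal (∑ j ∈ Finset.Icc 1 A, (j:ℝ)^(-t)) := by
        rw [ENNReal.ofReal_sum_of_nonneg]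
        intro j hj
        positivity
    _ ≤ _ := ENNReal.ofReal_le_ofReal (sum_rpow_le ht0 ht1 A)

lemma rpow_neg_anti {x y : ℝ≥0∞} {t : ℝ} (h0 : 0 ≤ t) (hxy : x ≤ y) :
    y ^ (-t) ≤ x ^ (-t) := by
  rw [ENNReal.rpow_neg, ENNReal.rpow_neg]
  exact ENNReal.inv_le_inv.2 (ENNReal.rpow_le_rpow hxy h0)

set_option maxHeartbeats 1000000 in
lemma key_bound (a : ℕ → ℕ) (ha : ∀ n, 1 ≤ n → 1 ≤ a n) (α t : ℝ) (hα : 1 < α)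
    (ht0 : 1 - 1/α < t) (ht1 : t < 1) (c : ℝ) (hc : 1 < c)
    (hb : ∀ᶠ k in atTop, (a (k+1) : ℝ) * (cfQ a k : ℝ) ^ (1 - α) < c) :
    ∃ C : ℝ≥0∞, C ≠ ⊤ ∧ ∀ᶠ m in atTop,
      dblSum a t m ≤ C * (cfQ a m : ℝ≥0∞) ^ (-(t*α - (α-1))) := by
  have hα0 : (0:ℝ) < α := by linarith
  have htpos : 0 < t := by
    have h1 : 1/α < 1 := by rw [div_lt_one hα0]; exact hα
    linarith
  set s : ℝ := t*α - (α-1) with hs_def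
  have hs : 0 < s := by
    have h1 : (α-1)/α < t := by
      have : 1 - 1/α = (α-1)/α := by field_simp
      linarith [this ▸ ht0]
    have := (div_lt_iff₀ hα0).1 h1
    simp only [hs_def]; nlinarith
  obtain ⟨N, hN⟩ := eventually_atTop.1 hb
  set C1 : ℝ≥0∞ := ENNReal.ofReal (c^(1-t)/(1-t)) with hC1_def
  -- inner sum bound
  have hinner : ∀ k, N ≤ k →
      (∑ j ∈ Finset.Icc 1 (a (k+1)), ((j * cfQ a k + qext a k : ℕ) : ℝ≥0∞) ^ (-t))
        ≤ C1 * (cfQ a k : ℝ≥0∞) ^ (-s) := by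
    intro k hk
    have hq1 : 1 ≤ cfQ a k := one_le_cfQ a ha k
    have hqR : (0:ℝ) < (cfQ a k : ℝ) := by exact_mod_cast hq1
    have hqne : ((cfQ a k : ℕ) : ℝ≥0∞) ≠ 0 := by exact_mod_cast Nat.one_le_iff_ne_zero.1 hq1
    have hqnetop : ((cfQ a k : ℕ) : ℝ≥0∞) ≠ ⊤ := ENNReal.natCast_ne_top _
    have step1 : (∑ j ∈ Finset.Icc 1 (a (k+1)), ((j * cfQ a k + qext a k : ℕ) : ℝ≥0∞) ^ (-t))
        ≤ (∑ j ∈ Finset.Icc 1 (a (k+1)), ((j:ℝ≥0∞))^(-t)) * ((cfQ a k : ℕ) : ℝ≥0∞) ^ (-t) := by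
      rw [Finset.sum_mul]
      apply Finset.sum_le_sum
      intro j hj
      have h1 : ((j * cfQ a k : ℕ) : ℝ≥0∞) ≤ ((j * cfQ a k + qext a k : ℕ) : ℝ≥0∞) := by
        exact_mod_cast Nat.le_add_right _ _
      calc ((j * cfQ a k + qext a k : ℕ) : ℝ≥0∞) ^ (-t)
          ≤ ((j * cfQ a k : ℕ) : ℝ≥0∞) ^ (-t) := rpow_neg_anti htpos.le h1
        _ = ((j:ℝ≥0∞) * ((cfQ a k : ℕ) : ℝ≥0∞)) ^ (-t) := by push_cast; ring_nf
        _ = (j:ℝ≥0∞)^(-t) * ((cfQ a k : ℕ) : ℝ≥0∞) ^ (-t) :=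
            ENNReal.mul_rpow_of_ne_top (ENNReal.natCast_ne_top _) (ENNReal.natCast_ne_top _) _
    have hA : ((a (k+1) : ℕ) : ℝ) ≤ c * (cfQ a k : ℝ)^(α-1) := by
      have h := hN k hk
      have hpow : (cfQ a k : ℝ) ^ (1-α) = ((cfQ a k : ℝ)^(α-1))⁻¹ := by
        rw [show (1-α) = -(α-1) by ring, Real.rpow_neg hqR.le]
      have hppos : (0:ℝ) < (cfQ a k : ℝ)^(α-1) := Real.rpow_pos_of_pos hqR _
      rw [hpow, ← div_eq_mul_inv, div_lt_iff₀ hppos] at h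
      exact h.le
    have step2 : (∑ j ∈ Finset.Icc 1 (a (k+1)), ((j:ℝ≥0∞))^(-t))
        ≤ C1 * ((cfQ a k : ℕ) : ℝ≥0∞) ^ ((α-1)*(1-t)) := by
      refine le_trans (esum_rpow_le htpos ht1 _) ?_
      have h2 : ((a (k+1):ℕ):ℝ)^(1-t) ≤ c^(1-t) * (cfQ a k : ℝ)^((α-1)*(1-t)) := by
        calc ((a (k+1):ℕ):ℝ)^(1-t) ≤ (c * (cfQ a k : ℝ)^(α-1))^(1-t) :=
              Real.rpow_le_rpow (Nat.cast_nonneg _) hA (by linarith)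
          _ = c^(1-t) * ((cfQ a k : ℝ)^(α-1))^(1-t) :=
              Real.mul_rpow (by linarith) (Real.rpow_pos_of_pos hqR _).le
          _ = c^(1-t) * (cfQ a k : ℝ)^((α-1)*(1-t)) := by
              rw [← Real.rpow_mul hqR.le]
      calc ENNReal.ofReal (((a (k+1):ℕ):ℝ)^(1-t)/(1-t))
          ≤ ENNReal.ofReal (c^(1-t)/(1-t) * (cfQ a k : ℝ)^((α-1)*(1-t))) := by
            apply ENNReal.ofReal_le_ofReal
            rw [div_mul_eq_mul_div]
            apply div_le_div_of_nonneg_right ?_ (by linarith)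
            exact h2
        _ = C1 * ENNReal.ofReal ((cfQ a k : ℝ)^((α-1)*(1-t))) := by
            rw [ENNReal.ofReal_mul (div_nonneg (Real.rpow_nonneg (by linarith) _) (by linarith))]
        _ = C1 * ((cfQ a k : ℕ) : ℝ≥0∞) ^ ((α-1)*(1-t)) := by
            rw [← ENNReal.ofReal_rpow_of_pos hqR, ENNReal.ofReal_natCast]
    calc (∑ j ∈ Finset.Icc 1 (a (k+1)), ((j * cfQ a k + qext a k : ℕ) : ℝ≥0∞) ^ (-t))
        ≤ (∑ j ∈ Finset.Icc 1 (a (k+1)), ((j:ℝ≥0∞))^(-t)) * ((cfQ a k : ℕ) : ℝ≥0∞) ^ (-t) := step1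
      _ ≤ C1 * ((cfQ a k : ℕ) : ℝ≥0∞) ^ ((α-1)*(1-t)) * ((cfQ a k : ℕ) : ℝ≥0∞) ^ (-t) :=
          mul_le_mul_left step2 _
      _ = C1 * (((cfQ a k : ℕ) : ℝ≥0∞) ^ ((α-1)*(1-t)) * ((cfQ a k : ℕ) : ℝ≥0∞) ^ (-t)) := by
          ring
      _ = C1 * ((cfQ a k : ℕ) : ℝ≥0∞) ^ (-s) := by
          rw [← ENNReal.rpow_add _ _ hqne hqnetop]
          congr 1
          simp only [hs_def]; ring
  -- geometric constants
  have h2s : (2:ℝ≥0∞)^(-s) < 1 := by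
    rw [ENNReal.rpow_neg, ENNReal.inv_lt_one]
    calc (1:ℝ≥0∞) = 2 ^ (0:ℝ) := by rw [ENNReal.rpow_zero]
    _ < 2 ^ s := ENNReal.rpow_lt_rpow_of_exponent_lt (by norm_num) (by norm_num) hs
  have hGne : ((1:ℝ≥0∞) - 2^(-s))⁻¹ ≠ ⊤ := ENNReal.inv_ne_top.2 (tsub_pos_of_lt h2s).ne'
  set F : ℕ → ℝ≥0∞ := fun k =>
    ∑ j ∈ Finset.Icc 1 (a (k+1)), ((j * cfQ a k + qext a k : ℕ) : ℝ≥0∞) ^ (-t) with hF_def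
  refine ⟨C1 * (2*((1:ℝ≥0∞) - 2^(-s))⁻¹), ?_, eventually_atTop.2 ⟨N, ?_⟩⟩
  · exact ENNReal.mul_ne_top ENNReal.ofReal_ne_top
      (ENNReal.mul_ne_top (by norm_num) hGne)
  intro m hm
  have hshift : dblSum a t m = ∑' i:ℕ, F (i+m) := by
    have h0 : (∑ i ∈ Finset.range m, if m ≤ i then F i else 0)
        + ∑' i:ℕ, (if m ≤ i + m then F (i+m) else 0)
        = ∑' k:ℕ, (if m ≤ k then F k else 0) :=
      Summable.sum_add_tsum_nat_add' (f := fun k => if m ≤ k then F k else 0) (k := m) ENNReal.summable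
    have h1 : (∑ i ∈ Finset.range m, if m ≤ i then F i else 0) = 0 :=
      Finset.sum_eq_zero fun i hi => if_neg (by simp only [Finset.mem_range] at hi; omega)
    have h2 : ∀ i:ℕ, (if m ≤ i + m then F (i+m) else 0) = F (i+m) :=
      fun i => if_pos (Nat.le_add_left m i)
    have h3 : dblSum a t m = ∑' k:ℕ, (if m ≤ k then F k else 0) := rfl
    rw [h3, ← h0, h1, zero_add]
    exact tsum_congr h2
  have hterm : ∀ j i, 2*j ≤ i → ((cfQ a (i+m) : ℕ):ℝ≥0∞)^(-s)
      ≤ ((2:ℝ≥0∞)^(-s))^j * ((cfQ a m : ℕ):ℝ≥0∞)^(-s) := by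
    intro j i hji
    have h1 : 2^j * cfQ a m ≤ cfQ a (i+m) :=
      le_trans (pow_le_cfQ a ha m j) (cfQ_mono a ha (by omega))
    have h2 := rpow_neg_anti (t := s) hs.le
      (by exact_mod_cast h1 : ((2^j * cfQ a m : ℕ):ℝ≥0∞) ≤ ((cfQ a (i+m) : ℕ):ℝ≥0∞))
    refine le_trans h2 (le_of_eq ?_)
    push_cast
    rw [ENNReal.mul_rpow_of_ne_top (ENNReal.pow_ne_top (by norm_num)) (ENNReal.natCast_ne_top _)]
    congr 1
    rw [← ENNReal.rpow_natCast 2 j, ← ENNReal.rpow_mul,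
      ← ENNReal.rpow_natCast ((2:ℝ≥0∞)^(-s)) j, ← ENNReal.rpow_mul, mul_comm]
  have hgeo : ∀ (g : ℕ → ℕ), (∀ j, 2*j ≤ g j) →
      ∑' j:ℕ, ((cfQ a (g j + m) : ℕ):ℝ≥0∞)^(-s)
        ≤ ((1:ℝ≥0∞) - 2^(-s))⁻¹ * ((cfQ a m : ℕ):ℝ≥0∞)^(-s) := by
    intro g hg
    calc ∑' j:ℕ, ((cfQ a (g j + m) : ℕ):ℝ≥0∞)^(-s)
        ≤ ∑' j:ℕ, ((2:ℝ≥0∞)^(-s))^j * ((cfQ a m : ℕ):ℝ≥0∞)^(-s) :=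
          ENNReal.tsum_le_tsum fun j => hterm j (g j) (hg j)
      _ = ((1:ℝ≥0∞) - 2^(-s))⁻¹ * ((cfQ a m : ℕ):ℝ≥0∞)^(-s) := by
          rw [ENNReal.tsum_mul_right, ENNReal.tsum_geometric]
  have hsplit : ∑' i:ℕ, ((cfQ a (i+m) : ℕ):ℝ≥0∞)^(-s)
      ≤ 2 * ((1:ℝ≥0∞) - 2^(-s))⁻¹ * ((cfQ a m : ℕ):ℝ≥0∞)^(-s) := by
    rw [← tsum_even_add_odd (f := fun i => ((cfQ a (i+m) : ℕ):ℝ≥0∞)^(-s))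
      ENNReal.summable ENNReal.summable]
    have he := hgeo (fun j => 2*j) (fun j => le_rfl)
    have ho := hgeo (fun j => 2*j+1) (fun j => by show 2*j ≤ 2*j+1; omega)
    calc (∑' j:ℕ, ((cfQ a (2*j+m) : ℕ):ℝ≥0∞)^(-s))
          + ∑' j:ℕ, ((cfQ a (2*j+1+m) : ℕ):ℝ≥0∞)^(-s)
        ≤ ((1:ℝ≥0∞) - 2^(-s))⁻¹ * ((cfQ a m : ℕ):ℝ≥0∞)^(-s)
          + ((1:ℝ≥0∞) - 2^(-s))⁻¹ * ((cfQ a m : ℕ):ℝ≥0∞)^(-s) := add_le_add he ho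
      _ = 2 * ((1:ℝ≥0∞) - 2^(-s))⁻¹ * ((cfQ a m : ℕ):ℝ≥0∞)^(-s) := by ring
  calc dblSum a t m = ∑' i:ℕ, F (i+m) := hshift
    _ ≤ ∑' i:ℕ, C1 * ((cfQ a (i+m) : ℕ):ℝ≥0∞)^(-s) :=
        ENNReal.tsum_le_tsum fun i => hinner (i+m) (by omega)
    _ = C1 * ∑' i:ℕ, ((cfQ a (i+m) : ℕ):ℝ≥0∞)^(-s) := ENNReal.tsum_mul_left
    _ ≤ C1 * (2 * ((1:ℝ≥0∞) - 2^(-s))⁻¹ * ((cfQ a m : ℕ):ℝ≥0∞)^(-s)) :=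
        mul_le_mul_right hsplit _
    _ = C1 * (2*((1:ℝ≥0∞) - 2^(-s))⁻¹) * ((cfQ a m : ℕ):ℝ≥0∞)^(-s) := by ring

/-- for `t ∈ (1 − 1/α, 1)` and `A_α(θ) < ∞`, the limsup
`limsup_m q_m^{tr} Σ_{k≥m} Σ_{j=1}^{a_{k+1}} (j q_k + q_{k-1})^{-t}` is finite for
`r = α − (α−1)/t` and vanishes for `0 < r < α − (α−1)/t`. -/
theorem stmt19 (θ : ℝ) (a : ℕ → ℕ) (α t : ℝ) (hα : 1 < α)
    (ht : t ∈ Set.Ioo (1 - 1/α) 1) (hcf : IsCF θ a)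
    (c : ℝ) (hc : 1 < c)
    (hb : ∀ᶠ k in atTop, (a (k+1) : ℝ) * (cfQ a k : ℝ) ^ (1 - α) < c) :
    (Filter.limsup
      (fun m => (cfQ a m : ENNReal) ^ (t * (α - (α-1)/t)) * dblSum a t m) atTop < ⊤) ∧
    (∀ r : ℝ, 0 < r → r < α - (α-1)/t →
      Filter.limsup
        (fun m => (cfQ a m : ENNReal) ^ (t * r) * dblSum a t m) atTop = 0) := by
  have ha := hcf.2.1
  have hα0 : (0:ℝ) < α := by linarith
  have htpos : 0 < t := by
    have h1 : 1/α < 1 := by rw [div_lt_one hα0]; exact hα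
    have := ht.1; linarith
  obtain ⟨C, hCtop, hev⟩ := key_bound a ha α t hα ht.1 ht.2 c hc hb
  set s : ℝ := t*α - (α-1) with hs_def
  have hts : t * (α - (α-1)/t) = s := by
    field_simp
    rw [hs_def]
  have hQne : ∀ m, ((cfQ a m : ℕ):ℝ≥0∞) ≠ 0 :=
    fun m => by exact_mod_cast Nat.one_le_iff_ne_zero.1 (one_le_cfQ a ha m)
  have hQtop : ∀ m, ((cfQ a m : ℕ):ℝ≥0∞) ≠ ⊤ := fun m => ENNReal.natCast_ne_top _
  constructor
  · have hbd : ∀ᶠ m in atTop,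
        (cfQ a m : ℝ≥0∞)^(t*(α-(α-1)/t)) * dblSum a t m ≤ C := by
      filter_upwards [hev] with m hm
      rw [hts]
      calc (cfQ a m : ℝ≥0∞)^s * dblSum a t m
          ≤ (cfQ a m : ℝ≥0∞)^s * (C * (cfQ a m : ℝ≥0∞)^(-s)) := mul_le_mul_right hm _
        _ = C * ((cfQ a m : ℝ≥0∞)^s * (cfQ a m : ℝ≥0∞)^(-s)) := by ring
        _ = C := by
            rw [← ENNReal.rpow_add _ _ (hQne m) (hQtop m), add_neg_cancel,
              ENNReal.rpow_zero, mul_one]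
    exact lt_of_le_of_lt (limsup_le_of_le (by isBoundedDefault) hbd) hCtop.lt_top
  · intro r hr0 hrlt
    have hrs : t*r < s := by
      have := mul_lt_mul_of_pos_left hrlt htpos
      rwa [hts] at this
    have hδpos : 0 < s - t*r := by linarith
    have h2δ : (2:ℝ≥0∞)^(-(s - t*r)) < 1 := by
      rw [ENNReal.rpow_neg, ENNReal.inv_lt_one]
      calc (1:ℝ≥0∞) = 2 ^ (0:ℝ) := by rw [ENNReal.rpow_zero]
      _ < 2 ^ (s - t*r) := ENNReal.rpow_lt_rpow_of_exponent_lt (by norm_num) (by norm_num) hδpos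
    have hg : Tendsto (fun m : ℕ => C * ((2:ℝ≥0∞)^(-(s - t*r)))^(m/2)) atTop (𝓝 0) := by
      have hgeo := ENNReal.tendsto_pow_atTop_nhds_zero_of_lt_one h2δ
      have hdiv : Tendsto (fun m:ℕ => m/2) atTop atTop :=
        tendsto_atTop_atTop.2 fun b => ⟨2*b, fun n hn => by omega⟩
      have := ENNReal.Tendsto.const_mul (hgeo.comp hdiv) (Or.inr hCtop)
      simpa using this
    have hle : ∀ᶠ m in atTop, (cfQ a m : ℝ≥0∞)^(t*r) * dblSum a t m
        ≤ C * ((2:ℝ≥0∞)^(-(s - t*r)))^(m/2) := by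
      filter_upwards [hev] with m hm
      have h2m : ((2:ℝ≥0∞))^(m/2) ≤ ((cfQ a m : ℕ):ℝ≥0∞) := by
        exact_mod_cast Nat.cast_le.2 (pow_half_le_cfQ a ha m)
      calc (cfQ a m : ℝ≥0∞)^(t*r) * dblSum a t m
          ≤ (cfQ a m : ℝ≥0∞)^(t*r) * (C * (cfQ a m : ℝ≥0∞)^(-s)) := mul_le_mul_right hm _
        _ = C * ((cfQ a m : ℝ≥0∞)^(t*r) * (cfQ a m : ℝ≥0∞)^(-s)) := by ring
        _ = C * (cfQ a m : ℝ≥0∞)^(-(s - t*r)) := by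
            rw [← ENNReal.rpow_add _ _ (hQne m) (hQtop m)]
            congr 1
            ring_nf
        _ ≤ C * (((2:ℝ≥0∞))^(m/2))^(-(s - t*r)) :=
            mul_le_mul_right (rpow_neg_anti hδpos.le h2m) _
        _ = C * ((2:ℝ≥0∞)^(-(s - t*r)))^(m/2) := by
            congr 1
            rw [← ENNReal.rpow_natCast 2 (m/2), ← ENNReal.rpow_mul,
              ← ENNReal.rpow_natCast ((2:ℝ≥0∞)^(-(s - t*r))) (m/2), ← ENNReal.rpow_mul,
              mul_comm]
    have htend : Tendsto (fun m => (cfQ a m : ℝ≥0∞)^(t*r) * dblSum a t m) atTop (𝓝 0) :=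
      tendsto_of_tendsto_of_tendsto_of_le_of_le' tendsto_const_nhds hg
        (Eventually.of_forall fun m => zero_le) hle
    exact htend.limsup_eq


end CFPaper
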